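/- Let x_1,...,x_N : [0,∞) → ℝ be a solution of the first-order cooperative system with communication failures (fixed scaling) on the real line (d = 1). Then the function γ_min(t) := min_{i ∈ {1,...,N}} x_i(t) is non-decreasing on [0,∞), and the function γ̂_max(t) := max_{i ∈ {1,...,N}} x_i(t) is non-increasing on [0,∞). -/

import Mathlib

open MeasureTheory Set Filter Topology

theorem auxAntitone
    (N : ℕ) (hN : 2 ≤ N)
    (φ : ℝ → ℝ)
    (hφ_lip : ∃ K : NNReal, LipschitzOnWith K φ (Ici 0))
    (hφ_pos : ∀ r : ℝ, 0 ≤ r → 0 < φ r)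
    (M : Fin N → Fin N → ℝ → ℝ)
    (hM_meas : ∀ i j, Measurable (M i j))
    (hM_range : ∀ i j, ∀ t : ℝ, 0 ≤ t → M i j t ∈ Icc (0:ℝ) 1)
    (x : Fin N → ℝ → ℝ)
    (hx_cont : ∀ i, ContinuousOn (x i) (Ici 0))
    (hx_sol : ∀ i, ∀ t : ℝ, 0 ≤ t → x i t = x i 0 +
      ∫ s in (0:ℝ)..t,
        (N : ℝ)⁻¹ * ∑ j, M i j s * φ |x i s - x j s| * (x j s - x i s)) :
    AntitoneOn (fun t : ℝ => ⨆ i, x i t) (Ici 0) := by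
  haveI : NeZero N := ⟨by omega⟩
  have hNpos : (0:ℝ) < N := by
    have : 0 < N := by omega
    exact_mod_cast this
  set v : Fin N → ℝ → ℝ := fun i s =>
    (N : ℝ)⁻¹ * ∑ j, M i j s * φ |x i s - x j s| * (x j s - x i s) with hv
  set g : ℝ → ℝ := fun t => ⨆ i, x i t with hgdef
  have hg_eq : ∀ t, g t = Finset.univ.sup' Finset.univ_nonempty (fun i => x i t) :=
    fun t => (Finset.sup'_univ_eq_ciSup _).symm
  have hle_g : ∀ (i : Fin N) (t : ℝ), x i t ≤ g t := fun i t =>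
    le_ciSup (Set.finite_range fun j => x j t).bddAbove i
  have hφ_cont : ContinuousOn φ (Ici 0) := hφ_lip.choose_spec.continuousOn
  -- continuity of g
  have hg_cont : ContinuousOn g (Ici 0) := by
    have hfun : g = fun t => Finset.univ.sup' Finset.univ_nonempty (fun i => x i t) :=
      funext hg_eq
    rw [hfun]
    intro t ht
    exact Filter.Tendsto.finset_sup'_nhds_apply _ (fun i _ => hx_cont i t ht)
  -- continuity of the nonlinear part
  have hf_cont : ∀ i j : Fin N, ContinuousOn (fun s => φ |x i s - x j s|) (Ici 0) := by
    intro i j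
    exact hφ_cont.comp (((hx_cont i).sub (hx_cont j)).abs)
      (fun s _ => Set.mem_Ici.mpr (abs_nonneg _))
  -- uniform bounds on compact time intervals
  have hbound : ∀ p q : ℝ, 0 ≤ p → p ≤ q → ∃ C : ℝ, 0 < C ∧
      (∀ i, ∀ s ∈ Icc p q, |v i s| ≤ C) ∧
      (∀ i, ∀ s ∈ Icc p q, v i s ≤ C * (g s - x i s)) := by
    intro p q hp hpq
    have hsub : Icc p q ⊆ Ici 0 := fun s hs => le_trans hp hs.1
    have hRi : ∀ i : Fin N, ∃ R : ℝ, ∀ s ∈ Icc p q, |x i s| ≤ R := by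
      intro i
      obtain ⟨R, hR⟩ := isCompact_Icc.exists_bound_of_continuousOn ((hx_cont i).mono hsub)
      exact ⟨R, fun s hs => hR s hs⟩
    choose R hR using hRi
    set R0 : ℝ := ∑ i, |R i| with hR0def
    have hR0nn : 0 ≤ R0 := Finset.sum_nonneg fun i _ => abs_nonneg _
    have hxR : ∀ i, ∀ s ∈ Icc p q, |x i s| ≤ R0 := by
      intro i s hs
      refine le_trans (hR i s hs) (le_trans (le_abs_self _) ?_)
      exact Finset.single_le_sum (fun j _ => abs_nonneg (R j)) (Finset.mem_univ i)
    obtain ⟨Cφ, hCφ⟩ := (isCompact_Icc (a := (0:ℝ)) (b := 2 * R0)).exists_bound_of_continuousOn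
      (hφ_cont.mono (fun r hr => hr.1))
    set C1 : ℝ := |Cφ| + 1 with hC1def
    have hC1 : 0 < C1 := by positivity
    have hdle : ∀ i j : Fin N, ∀ s ∈ Icc p q, |x i s - x j s| ≤ 2 * R0 := by
      intro i j s hs
      have h3 : |x i s - x j s| ≤ |x i s| + |x j s| := abs_sub _ _
      have h1 := hxR i s hs
      have h2 := hxR j s hs
      linarith
    have hφle : ∀ i j : Fin N, ∀ s ∈ Icc p q,
        0 ≤ φ |x i s - x j s| ∧ φ |x i s - x j s| ≤ C1 := by
      intro i j s hs
      refine ⟨(hφ_pos _ (abs_nonneg _)).le, ?_⟩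
      have hmem : |x i s - x j s| ∈ Icc (0:ℝ) (2 * R0) := ⟨abs_nonneg _, hdle i j s hs⟩
      have h1 : φ |x i s - x j s| ≤ Cφ :=
        le_trans (le_abs_self _) (by simpa [Real.norm_eq_abs] using hCφ _ hmem)
      rw [hC1def]
      linarith [le_abs_self Cφ]
    refine ⟨C1 * (2 * R0 + 1), by nlinarith, ?_, ?_⟩
    · -- absolute bound
      intro i s hs
      have hterm : ∀ j : Fin N,
          |M i j s * φ |x i s - x j s| * (x j s - x i s)| ≤ C1 * (2 * R0) := by
        intro j
        have hM := hM_range i j s (hsub hs)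
        have hφ := hφle i j s hs
        have hd := hdle j i s hs
        rw [abs_mul, abs_mul, abs_of_nonneg hM.1, abs_of_nonneg hφ.1]
        have h1 : M i j s * φ |x i s - x j s| ≤ 1 * C1 :=
          mul_le_mul hM.2 hφ.2 hφ.1 zero_le_one
        calc M i j s * φ |x i s - x j s| * |x j s - x i s|
            ≤ (1 * C1) * (2 * R0) :=
              mul_le_mul h1 hd (abs_nonneg _) (by positivity)
          _ = C1 * (2 * R0) := by ring
      have hsum : |∑ j, M i j s * φ |x i s - x j s| * (x j s - x i s)|
          ≤ (N : ℝ) * (C1 * (2 * R0)) := by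
        calc |∑ j, M i j s * φ |x i s - x j s| * (x j s - x i s)|
            ≤ ∑ j, |M i j s * φ |x i s - x j s| * (x j s - x i s)| :=
              Finset.abs_sum_le_sum_abs _ _
          _ ≤ ∑ _j : Fin N, C1 * (2 * R0) := Finset.sum_le_sum fun j _ => hterm j
          _ = (N : ℝ) * (C1 * (2 * R0)) := by
              simp [Finset.sum_const, Finset.card_univ, mul_comm]
      have : |v i s| = (N : ℝ)⁻¹ * |∑ j, M i j s * φ |x i s - x j s| * (x j s - x i s)| := by
        rw [hv]; rw [abs_mul, abs_of_nonneg (by positivity : (0:ℝ) ≤ (N:ℝ)⁻¹)]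
      rw [this]
      calc (N : ℝ)⁻¹ * |∑ j, M i j s * φ |x i s - x j s| * (x j s - x i s)|
          ≤ (N : ℝ)⁻¹ * ((N : ℝ) * (C1 * (2 * R0))) :=
            mul_le_mul_of_nonneg_left hsum (by positivity)
        _ = C1 * (2 * R0) := by field_simp
        _ ≤ C1 * (2 * R0 + 1) := by nlinarith
    · -- one-sided bound
      intro i s hs
      have hgx : 0 ≤ g s - x i s := sub_nonneg.2 (hle_g i s)
      have hterm : ∀ j : Fin N,
          M i j s * φ |x i s - x j s| * (x j s - x i s) ≤ C1 * (g s - x i s) := by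
        intro j
        have hM := hM_range i j s (hsub hs)
        have hφ := hφle i j s hs
        rcases le_or_gt (x j s) (x i s) with hji | hji
        · have : M i j s * φ |x i s - x j s| * (x j s - x i s) ≤ 0 :=
            mul_nonpos_of_nonneg_of_nonpos (mul_nonneg hM.1 hφ.1) (by linarith)
          calc M i j s * φ |x i s - x j s| * (x j s - x i s) ≤ 0 := this
            _ ≤ C1 * (g s - x i s) := by positivity
        · have h1 : M i j s * φ |x i s - x j s| ≤ 1 * C1 :=
            mul_le_mul hM.2 hφ.2 hφ.1 zero_le_one
          have h2 : x j s - x i s ≤ g s - x i s := by linarith [hle_g j s]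
          calc M i j s * φ |x i s - x j s| * (x j s - x i s)
              ≤ (1 * C1) * (g s - x i s) :=
                mul_le_mul h1 h2 (by linarith) (by positivity)
            _ = C1 * (g s - x i s) := by ring
      have hsum : ∑ j, M i j s * φ |x i s - x j s| * (x j s - x i s)
          ≤ (N : ℝ) * (C1 * (g s - x i s)) := by
        calc ∑ j, M i j s * φ |x i s - x j s| * (x j s - x i s)
            ≤ ∑ _j : Fin N, C1 * (g s - x i s) := Finset.sum_le_sum fun j _ => hterm j
          _ = (N : ℝ) * (C1 * (g s - x i s)) := by
              simp [Finset.sum_const, Finset.card_univ, mul_comm]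
      calc v i s ≤ (N : ℝ)⁻¹ * ((N : ℝ) * (C1 * (g s - x i s))) := by
            rw [hv]; exact mul_le_mul_of_nonneg_left hsum (by positivity)
        _ = C1 * (g s - x i s) := by field_simp
        _ ≤ (C1 * (2 * R0 + 1)) * (g s - x i s) := by
            nlinarith [mul_nonneg (mul_nonneg hC1.le hR0nn) hgx]
  -- integrability
  have hInt : ∀ (i : Fin N) (p q : ℝ), 0 ≤ p → p ≤ q →
      IntervalIntegrable (v i) volume p q := by
    intro i p q hp hpq
    obtain ⟨C, hC0, hCa, _⟩ := hbound p q hp hpq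
    rw [intervalIntegrable_iff_integrableOn_Ioc_of_le hpq]
    have hsub : Ioc p q ⊆ Ici 0 := fun s hs => le_trans hp hs.1.le
    have hmeas : AEStronglyMeasurable (v i) (volume.restrict (Ioc p q)) := by
      apply AEStronglyMeasurable.const_mul
      apply Finset.aestronglyMeasurable_fun_sum
      intro j _
      refine AEStronglyMeasurable.mul (AEStronglyMeasurable.mul ?_ ?_) ?_
      · exact (hM_meas i j).aestronglyMeasurable
      · exact ((hf_cont i j).mono hsub).aestronglyMeasurable measurableSet_Ioc
      · exact (((hx_cont j).sub (hx_cont i)).mono hsub).aestronglyMeasurable measurableSet_Ioc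
    refine Integrable.mono' (integrable_const C) hmeas ?_
    refine (ae_restrict_iff' measurableSet_Ioc).2 (Filter.Eventually.of_forall fun s hs => ?_)
    simpa [Real.norm_eq_abs] using hCa i s ⟨hs.1.le, hs.2⟩
  -- increments
  have hdiff : ∀ (i : Fin N) (t z : ℝ), 0 ≤ t → t ≤ z →
      x i z - x i t = ∫ s in t..z, v i s := by
    intro i t z ht htz
    have h1 := hx_sol i t ht
    have h2 := hx_sol i z (le_trans ht htz)
    have h3 := intervalIntegral.integral_add_adjacent_intervals
      (hInt i 0 t le_rfl ht) (hInt i t z ht htz)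
    rw [hv] at h3
    linarith [h1, h2, h3]
  -- main argument
  intro a ha b hb hab
  obtain ⟨C, hC0, hCa, hCb⟩ := hbound a b ha hab
  have hsubab : Icc a b ⊆ Ici 0 := fun s hs => le_trans ha hs.1
  have key : ∀ z ∈ Icc a b, g z ≤ g a := by
    intro z hz
    refine image_le_of_liminf_slope_right_le_deriv_boundary (B := fun _ => g a)
      (B' := fun _ => 0) (hg_cont.mono hsubab) le_rfl continuousOn_const
      (fun t _ => hasDerivWithinAt_const t _ _) ?_ hz
    intro t ht r hr
    have ht0 : (0:ℝ) ≤ t := le_trans ha ht.1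
    have hE : ∀ i : Fin N, ∀ᶠ z in 𝓝[>] t, x i z < g t + r * (z - t) := by
      intro i
      rcases eq_or_lt_of_le (hle_g i t) with hi | hi
      · -- x i t = g t : use the one-sided bound
        have hCW : ContinuousWithinAt (fun s => g s - x i s) (Ici 0) t :=
          ((hg_cont t ht0).sub (hx_cont i t ht0))
        have hval : g t - x i t < r / (2 * C) := by
          rw [← hi, sub_self]; positivity
        have hev : ∀ᶠ s in 𝓝[Ici 0] t, g s - x i s < r / (2 * C) :=
          hCW (Iio_mem_nhds hval)
        rw [eventually_nhdsWithin_iff] at hev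
        rw [Metric.eventually_nhds_iff] at hev
        obtain ⟨η, hη0, hη⟩ := hev
        have hmin : 0 < min η (b - t) := lt_min hη0 (by linarith [ht.2])
        filter_upwards [Ioo_mem_nhdsGT_of_mem
          (show t ∈ Ico t (t + min η (b - t)) from ⟨le_rfl, by linarith⟩)] with z hz'
        obtain ⟨htz, hzlt⟩ := hz'
        have hzb : z ≤ b := by
          have := min_le_right η (b - t); linarith
        have hzη : z - t < η := by
          have := min_le_left η (b - t); linarith
        have hvb : ∀ s ∈ Icc t z, v i s ≤ r / 2 := by
          intro s hs
          have hsab : s ∈ Icc a b := ⟨le_trans ht.1 hs.1, le_trans hs.2 hzb⟩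
          have hdist : dist s t < η := by
            rw [Real.dist_eq, abs_of_nonneg (by linarith [hs.1])]
            linarith [hs.2]
          have hsmall : g s - x i s < r / (2 * C) := hη hdist (le_trans ht0 hs.1)
          have := hCb i s hsab
          have hCr : C * (g s - x i s) ≤ C * (r / (2 * C)) :=
            mul_le_mul_of_nonneg_left hsmall.le hC0.le
          have heq : C * (r / (2 * C)) = r / 2 := by
            field_simp
          linarith
        have hint := hInt i t z ht0 htz.le
        have hmono := intervalIntegral.integral_mono_on htz.le hint
          intervalIntegrable_const hvb
        rw [intervalIntegral.integral_const, smul_eq_mul] at hmono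
        have hdz := hdiff i t z ht0 htz.le
        have hxz : x i z - x i t ≤ (z - t) * (r / 2) := by rw [hdz]; exact hmono
        have hlt : (z - t) * (r / 2) < r * (z - t) := by
          nlinarith [mul_pos hr (sub_pos.2 htz)]
        linarith [hxz, hlt, hi.le, hi.ge]
      · -- x i t < g t : use the speed bound
        have hε : 0 < g t - x i t := by linarith
        have hmin : 0 < min ((g t - x i t) / C) (b - t) :=
          lt_min (by positivity) (by linarith [ht.2])
        filter_upwards [Ioo_mem_nhdsGT_of_mem
          (show t ∈ Ico t (t + min ((g t - x i t) / C) (b - t)) from ⟨le_rfl, by linarith⟩)]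
          with z hz'
        obtain ⟨htz, hzlt⟩ := hz'
        have hzb : z ≤ b := by
          have := min_le_right ((g t - x i t) / C) (b - t); linarith
        have hzε : z - t < (g t - x i t) / C := by
          have := min_le_left ((g t - x i t) / C) (b - t); linarith
        have hnorm : ‖∫ s in t..z, v i s‖ ≤ C * |z - t| := by
          apply intervalIntegral.norm_integral_le_of_norm_le_const
          intro s hs
          rw [Set.uIoc_of_le htz.le] at hs
          have hsab : s ∈ Icc a b := ⟨le_trans ht.1 hs.1.le, le_trans hs.2 hzb⟩
          simpa [Real.norm_eq_abs] using hCa i s hsab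
        have hdz := hdiff i t z ht0 htz.le
        rw [← hdz, Real.norm_eq_abs, abs_of_nonneg (by linarith [htz.le] : (0:ℝ) ≤ z - t)]
          at hnorm
        have h1 : x i z - x i t ≤ C * (z - t) := le_trans (le_abs_self _) hnorm
        have h2 : C * (z - t) < g t - x i t := by
          have := mul_lt_mul_of_pos_left hzε hC0
          rw [mul_div_cancel₀ _ (ne_of_gt hC0)] at this
          linarith
        linarith [mul_pos hr (sub_pos.2 htz)]
    have hEall : ∀ᶠ z in 𝓝[>] t, ∀ i, x i z < g t + r * (z - t) := eventually_all.2 hE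
    have hmem : ∀ᶠ z in 𝓝[>] t, z ∈ Ioi t := self_mem_nhdsWithin
    refine ((hEall.and hmem).mono ?_).frequently
    rintro z ⟨h1, h2⟩
    rw [slope_def_field]
    rw [div_lt_iff₀ (by simpa using h2 : (0:ℝ) < z - t)]
    have : g z < g t + r * (z - t) := by
      rw [hg_eq z]
      exact (Finset.sup'_lt_iff Finset.univ_nonempty).2 fun i _ => h1 i
    linarith
  exact key b ⟨hab, le_rfl⟩

/-- Along a solution of the first-order cooperative system
with communication failures (fixed scaling) on the real line, the function
`γ_min(t) = min_i x i t` is non-decreasing and the function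
`γ̂_max(t) = max_i x i t` is non-increasing on `[0, ∞)`. -/
theorem min_monotone_max_antitone_real_line
    (N : ℕ) (hN : 2 ≤ N)
    (φ : ℝ → ℝ)
    (hφ_lip : ∃ K : NNReal, LipschitzOnWith K φ (Ici 0))
    (hφ_pos : ∀ r : ℝ, 0 ≤ r → 0 < φ r)
    (M : Fin N → Fin N → ℝ → ℝ)
    (hM_meas : ∀ i j, Measurable (M i j))
    (hM_range : ∀ i j, ∀ t : ℝ, 0 ≤ t → M i j t ∈ Icc (0:ℝ) 1)
    (x : Fin N → ℝ → ℝ)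
    (hx_cont : ∀ i, ContinuousOn (x i) (Ici 0))
    (hx_sol : ∀ i, ∀ t : ℝ, 0 ≤ t → x i t = x i 0 +
      ∫ s in (0:ℝ)..t,
        (N : ℝ)⁻¹ * ∑ j, M i j s * φ |x i s - x j s| * (x j s - x i s)) :
    MonotoneOn (fun t : ℝ => ⨅ i, x i t) (Ici 0) ∧
    AntitoneOn (fun t : ℝ => ⨆ i, x i t) (Ici 0) := by
  haveI : NeZero N := ⟨by omega⟩
  have hmax := auxAntitone N hN φ hφ_lip hφ_pos M hM_meas hM_range x hx_cont hx_sol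
  refine ⟨?_, hmax⟩
  -- apply the max result to the reflected system `y i t = -(x i t)`
  have hy_cont : ∀ i, ContinuousOn (fun t => -(x i t)) (Ici 0) := fun i => (hx_cont i).neg
  have hy_sol : ∀ i, ∀ t : ℝ, 0 ≤ t → -(x i t) = -(x i 0) +
      ∫ s in (0:ℝ)..t,
        (N : ℝ)⁻¹ * ∑ j, M i j s * φ |-(x i s) - -(x j s)| * (-(x j s) - -(x i s)) := by
    intro i t ht
    have h1 := hx_sol i t ht
    have h2 : (fun s => (N : ℝ)⁻¹ *
          ∑ j, M i j s * φ |-(x i s) - -(x j s)| * (-(x j s) - -(x i s)))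
        = fun s => -((N : ℝ)⁻¹ * ∑ j, M i j s * φ |x i s - x j s| * (x j s - x i s)) := by
      funext s
      have habs : ∀ j : Fin N, |-(x i s) - -(x j s)| = |x i s - x j s| := by
        intro j
        rw [show -(x i s) - -(x j s) = -(x i s - x j s) by ring, abs_neg]
      simp only [habs]
      rw [← mul_neg, ← Finset.sum_neg_distrib]
      congr 1
      exact Finset.sum_congr rfl fun j _ => by ring
    rw [h2, intervalIntegral.integral_neg]
    linarith [h1]
  have hmin := auxAntitone N hN φ hφ_lip hφ_pos M hM_meas hM_range
    (fun i t => -(x i t)) hy_cont hy_sol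
  have hconv : ∀ t : ℝ, (⨅ i, x i t) = -⨆ i, -(x i t) := by
    intro t
    rw [← Finset.inf'_univ_eq_ciInf, ← Finset.sup'_univ_eq_ciSup]
    apply le_antisymm
    · refine le_neg.mpr (Finset.sup'_le _ _ fun i _ => ?_)
      have := Finset.inf'_le (fun j => x j t) (Finset.mem_univ i)
      linarith
    · refine Finset.le_inf' _ _ fun i _ => ?_
      have := Finset.le_sup' (fun j => -(x j t)) (Finset.mem_univ i)
      linarith
  intro a ha b hb hab
  have h := hmin ha hb hab
  simp only at h ⊢
  rw [hconv a, hconv b]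
  exact neg_le_neg h
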